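/- Let N > 2 be an integer, p > 1, k < 0, and 0 < b ≤ π/2. Suppose U : [0, b) → ℝ is differentiable with U(0) = 0, satisfies the U-equation on (0, b), and U(x) > 0 and U'(x) > 0 for all x ∈ (0, b). Define, for x ∈ (0, b), Q(x) = ((1-p)·(2·U(x)·U'(x) + 4·(U(x)³ + U(x))·k) + 2·U(x)·(p-N) + (3·U(x)² + 1)·(2-N)·cot(x)) / ((p-1)·U(x)² + 1). If W : [0, b) → ℝ is continuous on [0, b), differentiable on (0, b), with W(0) = 0 and W'(x) = Q(x)·W(x) + (1-p)·(U(x)² + 1)²/((p-1)·U(x)² + 1) for all x ∈ (0, b), then W(x) < 0 for all x ∈ (0, b). -/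

import Mathlib

noncomputable section
open Real Set Filter Topology

/-- `U` satisfies the U-equation (for parameters `p`, `N`, `k`) on the set `I`:
`((p-1)U² + 1)U' = k(1-p)(U² + 1)² + (U² + 1)(p - N + (2-N)·U·cot x)`. -/
def UEqOn (p : ℝ) (N : ℕ) (k : ℝ) (U : ℝ → ℝ) (I : Set ℝ) : Prop :=
  ∀ x ∈ I,
    ((p - 1) * (U x) ^ 2 + 1) * deriv U x =
      k * (1 - p) * ((U x) ^ 2 + 1) ^ 2
        + ((U x) ^ 2 + 1) * (p - (N : ℝ) + (2 - (N : ℝ)) * U x * Real.cot x)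

/-- The variational function `W` (playing the role of `∂U/∂k`), solving the linear
equation `W' = Q·W + (1-p)(U²+1)²/((p-1)U²+1)` with `W(0) = 0`, is negative on `(0,b)`. -/
theorem W_negative (N : ℕ) (hN : 2 < N) (p : ℝ) (hp : 1 < p) (k : ℝ) (hk : k < 0)
    (b : ℝ) (hb0 : 0 < b) (hb : b ≤ π / 2)
    (U W : ℝ → ℝ)
    (hUd : ∀ x ∈ Ico (0 : ℝ) b, DifferentiableWithinAt ℝ U (Ici 0) x)
    (hU0 : U 0 = 0)
    (hUeq : UEqOn p N k U (Ioo 0 b))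
    (hUpos : ∀ x ∈ Ioo (0 : ℝ) b, 0 < U x ∧ 0 < deriv U x)
    (hWc : ContinuousOn W (Ico 0 b))
    (hWd : ∀ x ∈ Ioo (0 : ℝ) b, DifferentiableAt ℝ W x)
    (hW0 : W 0 = 0)
    (hW' : ∀ x ∈ Ioo (0 : ℝ) b,
      deriv W x =
        (((1 - p) * (2 * U x * deriv U x + 4 * ((U x) ^ 3 + U x) * k)
            + 2 * U x * (p - (N : ℝ))
            + (3 * (U x) ^ 2 + 1) * (2 - (N : ℝ)) * Real.cot x)
          / ((p - 1) * (U x) ^ 2 + 1)) * W x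
        + (1 - p) * ((U x) ^ 2 + 1) ^ 2 / ((p - 1) * (U x) ^ 2 + 1)) :
    ∀ x ∈ Ioo (0 : ℝ) b, W x < 0 := by
  have hN2 : (2 : ℝ) - (N : ℝ) < 0 := by
    have : (2 : ℝ) < (N : ℝ) := by exact_mod_cast hN
    linarith
  have hDpos : ∀ x : ℝ, 0 < (p - 1) * (U x) ^ 2 + 1 := fun x => by nlinarith [sq_nonneg (U x)]
  have hfneg : ∀ x : ℝ,
      (1 - p) * ((U x) ^ 2 + 1) ^ 2 / ((p - 1) * (U x) ^ 2 + 1) < 0 := by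
    intro x
    apply div_neg_of_neg_of_pos _ (hDpos x)
    have h1 : (0 : ℝ) < ((U x) ^ 2 + 1) ^ 2 := by positivity
    nlinarith
  -- U tends to 0 from the right
  have hU0c : Tendsto U (𝓝[>] (0 : ℝ)) (𝓝 0) := by
    have h : ContinuousWithinAt U (Ici 0) 0 := (hUd 0 ⟨le_refl 0, hb0⟩).continuousWithinAt
    have h2 : Tendsto U (𝓝[Ici (0:ℝ)] 0) (𝓝 (U 0)) := h
    rw [hU0] at h2
    exact h2.mono_left (nhdsWithin_mono _ Ioi_subset_Ici_self)
  -- cot tends to +∞ at 0⁺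
  have hcot : Tendsto Real.cot (𝓝[>] (0 : ℝ)) atTop := by
    have hsin : Tendsto Real.sin (𝓝[>] (0 : ℝ)) (𝓝[>] 0) := by
      apply tendsto_nhdsWithin_of_tendsto_nhds_of_eventually_within
      · have := Real.continuous_sin.tendsto 0
        simpa using this.mono_left nhdsWithin_le_nhds
      · filter_upwards [Ioo_mem_nhdsGT_of_mem
          (⟨le_refl (0:ℝ), Real.pi_pos⟩ : (0:ℝ) ∈ Ico (0:ℝ) π)] with t ht
        exact Real.sin_pos_of_pos_of_lt_pi ht.1 ht.2
    have hcos : Tendsto Real.cos (𝓝[>] (0 : ℝ)) (𝓝 1) := by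
      have := Real.continuous_cos.tendsto 0
      simpa using this.mono_left nhdsWithin_le_nhds
    have h := Filter.Tendsto.pos_mul_atTop one_pos hcos hsin.inv_tendsto_nhdsGT_zero
    exact h.congr fun x => by rw [Real.cot_eq_cos_div_sin, div_eq_mul_inv]; rfl
  -- the "cot part" of the numerator tends to -∞
  set g : ℝ → ℝ := fun x =>
    (1 - p) * (4 * ((U x) ^ 3 + U x) * k) + 2 * U x * (p - (N : ℝ))
      + (3 * (U x) ^ 2 + 1) * (2 - (N : ℝ)) * Real.cot x with hgdef
  have hg : Tendsto g (𝓝[>] (0 : ℝ)) atBot := by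
    have hA : Tendsto (fun x => (1 - p) * (4 * ((U x) ^ 3 + U x) * k) + 2 * U x * (p - (N : ℝ)))
        (𝓝[>] (0 : ℝ)) (𝓝 0) := by
      have hφ : Continuous (fun u : ℝ => (1 - p) * (4 * (u ^ 3 + u) * k) + 2 * u * (p - (N : ℝ))) := by
        fun_prop
      have := (hφ.tendsto 0).comp hU0c
      simpa [Function.comp_def] using this
    have hB : Tendsto (fun x => (3 * (U x) ^ 2 + 1) * (2 - (N : ℝ))) (𝓝[>] (0 : ℝ))
        (𝓝 (2 - (N : ℝ))) := by
      have hψ : Continuous (fun u : ℝ => (3 * u ^ 2 + 1) * (2 - (N : ℝ))) := by fun_prop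
      have := (hψ.tendsto 0).comp hU0c
      simpa [Function.comp_def] using this
    have hC : Tendsto (fun x => (3 * (U x) ^ 2 + 1) * (2 - (N : ℝ)) * Real.cot x)
        (𝓝[>] (0 : ℝ)) atBot := Filter.Tendsto.neg_mul_atTop hN2 hB hcot
    exact hA.add_atBot hC
  have hgev : ∀ᶠ x in 𝓝[>] (0 : ℝ), g x < 0 := hg.eventually (eventually_lt_atBot 0)
  obtain ⟨δ₀, hδ₀, hδsub⟩ := mem_nhdsGT_iff_exists_Ioo_subset.1 hgev
  set δ := min δ₀ b with hδdef
  have hδpos : 0 < δ := lt_min hδ₀ hb0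
  have hδb : δ ≤ b := min_le_right _ _
  -- Q < 0 on (0, δ)
  have hQneg : ∀ x ∈ Ioo (0 : ℝ) δ,
      ((1 - p) * (2 * U x * deriv U x + 4 * ((U x) ^ 3 + U x) * k)
        + 2 * U x * (p - (N : ℝ)) + (3 * (U x) ^ 2 + 1) * (2 - (N : ℝ)) * Real.cot x)
        / ((p - 1) * (U x) ^ 2 + 1) < 0 := by
    intro x hx
    have hxb : x ∈ Ioo (0 : ℝ) b := ⟨hx.1, lt_of_lt_of_le hx.2 hδb⟩
    obtain ⟨hU, hU'⟩ := hUpos x hxb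
    have hgx : g x < 0 := hδsub ⟨hx.1, lt_of_lt_of_le hx.2 (min_le_left _ _)⟩
    apply div_neg_of_neg_of_pos _ (hDpos x)
    have hfirst : (1 - p) * (2 * U x * deriv U x) < 0 := by nlinarith [mul_pos hU hU']
    have hsplit : (1 - p) * (2 * U x * deriv U x + 4 * ((U x) ^ 3 + U x) * k)
        + 2 * U x * (p - (N : ℝ)) + (3 * (U x) ^ 2 + 1) * (2 - (N : ℝ)) * Real.cot x
        = (1 - p) * (2 * U x * deriv U x) + g x := by rw [hgdef]; ring
    rw [hsplit]; linarith
  -- Step 2a: W cannot be positive on (0, δ)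
  have key1 : ∀ y ∈ Ioo (0 : ℝ) δ, 0 < W y → False := by
    intro y hy hWy
    have hyb : y < b := lt_of_lt_of_le hy.2 hδb
    set S := Icc (0 : ℝ) y ∩ W ⁻¹' Iic 0 with hSdef
    have hScl : IsClosed S :=
      (hWc.mono fun t ht => ⟨ht.1, lt_of_le_of_lt ht.2 hyb⟩).preimage_isClosed_of_isClosed
        isClosed_Icc isClosed_Iic
    have hSne : S.Nonempty := ⟨0, ⟨le_refl 0, le_of_lt hy.1⟩, by simp [hW0]⟩
    have hSbdd : BddAbove S := BddAbove.mono inter_subset_left bddAbove_Icc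
    set s := sSup S with hsdef
    have hsS : s ∈ S := hScl.csSup_mem hSne hSbdd
    have hs0 : 0 ≤ s := hsS.1.1
    have hsy : s ≤ y := hsS.1.2
    have hWsle : W s ≤ 0 := hsS.2
    have hslt : s < y := lt_of_le_of_ne hsy (fun h => by rw [h] at hWsle; linarith)
    have hposIoc : ∀ t ∈ Ioc s y, 0 < W t := by
      intro t ht
      by_contra hle; push_neg at hle
      exact absurd (le_csSup hSbdd ⟨⟨le_trans hs0 (le_of_lt ht.1), ht.2⟩, hle⟩)
        (not_le.2 ht.1)
    have hclos : s ∈ closure (Ioo s y) := by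
      rw [closure_Ioo (ne_of_lt hslt)]; exact ⟨le_refl s, le_of_lt hslt⟩
    haveI : (𝓝[Ioo s y] s).NeBot := mem_closure_iff_nhdsWithin_neBot.1 hclos
    have hcw : Tendsto W (𝓝[Ioo s y] s) (𝓝 (W s)) := by
      have h : ContinuousWithinAt W (Ico 0 b) s := hWc s ⟨hs0, lt_of_le_of_lt hsy hyb⟩
      exact h.mono_left (nhdsWithin_mono _ fun t ht =>
        ⟨le_of_lt (lt_of_le_of_lt hs0 ht.1), lt_trans ht.2 hyb⟩)
    have hWsge : 0 ≤ W s :=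
      ge_of_tendsto hcw (eventually_mem_nhdsWithin.mono fun t ht =>
        le_of_lt (hposIoc t ⟨ht.1, le_of_lt ht.2⟩))
    have hWs0 : W s = 0 := le_antisymm hWsle hWsge
    have hderiv : ∀ t ∈ interior (Icc s y), deriv W t < 0 := by
      rw [interior_Icc]
      intro t ht
      have htb : t ∈ Ioo (0 : ℝ) b := ⟨lt_of_le_of_lt hs0 ht.1, lt_trans ht.2 hyb⟩
      have htδ : t ∈ Ioo (0 : ℝ) δ := ⟨htb.1, lt_trans ht.2 hy.2⟩
      rw [hW' t htb]
      have hQW : (((1 - p) * (2 * U t * deriv U t + 4 * ((U t) ^ 3 + U t) * k)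
          + 2 * U t * (p - (N : ℝ)) + (3 * (U t) ^ 2 + 1) * (2 - (N : ℝ)) * Real.cot t)
          / ((p - 1) * (U t) ^ 2 + 1)) * W t < 0 :=
        mul_neg_of_neg_of_pos (hQneg t htδ) (hposIoc t ⟨ht.1, le_of_lt ht.2⟩)
      linarith [hfneg t]
    have hanti : StrictAntiOn W (Icc s y) :=
      strictAntiOn_of_deriv_neg (convex_Icc s y)
        (hWc.mono fun t ht => ⟨le_trans hs0 ht.1, lt_of_le_of_lt ht.2 hyb⟩) hderiv
    have := hanti ⟨le_refl s, le_of_lt hslt⟩ ⟨le_of_lt hslt, le_refl y⟩ hslt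
    rw [hWs0] at this
    linarith
  -- Step 2b: W < 0 on (0, δ)
  have key2 : ∀ y ∈ Ioo (0 : ℝ) δ, W y < 0 := by
    intro y hy
    rcases lt_trichotomy (W y) 0 with h | h | h
    · exact h
    · exfalso
      have hyb : y ∈ Ioo (0 : ℝ) b := ⟨hy.1, lt_of_lt_of_le hy.2 hδb⟩
      have hd : deriv W y < 0 := by
        rw [hW' y hyb, h]
        simpa using hfneg y
      have hT : Tendsto (slope W y) (𝓝[<] y) (𝓝 (deriv W y)) :=
        (hasDerivAt_iff_tendsto_slope.1 (hWd y hyb).hasDerivAt).mono_left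
          (nhdsWithin_mono _ fun t ht => mem_compl_singleton_iff.2 (ne_of_lt ht))
      have h1 : ∀ᶠ t in 𝓝[<] y, slope W y t < 0 := hT.eventually_lt_const hd
      have h2 : ∀ᶠ t in 𝓝[<] y, t ∈ Ioo (0 : ℝ) y :=
        eventually_of_mem (Ioo_mem_nhdsLT_of_mem ⟨hy.1, le_refl y⟩) fun t ht => ht
      obtain ⟨t, hst, hty⟩ := (h1.and h2).exists
      have hWt : 0 < W t := by
        by_contra hle; push_neg at hle
        have hslope : 0 ≤ slope W y t := by
          rw [slope_def_field]
          exact div_nonneg_iff.2 (Or.inr ⟨by rw [h]; linarith, by linarith [hty.2]⟩)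
        linarith
      exact key1 t ⟨hty.1, lt_trans hty.2 hy.2⟩ hWt
    · exact absurd h (not_lt.2 (le_of_lt (by exact absurd h (fun h' => (key1 y hy h').elim))))
  -- Step 3: propagate negativity to all of (0, b)
  intro x hx
  rcases lt_or_ge x δ with hxδ | hxδ
  · exact key2 x ⟨hx.1, hxδ⟩
  · by_contra hcon; push_neg at hcon
    set c := δ / 2 with hcdef
    have hcδ : c ∈ Ioo (0 : ℝ) δ := ⟨by linarith, by linarith⟩
    have hWcneg : W c < 0 := key2 c hcδ
    have hcx : c < x := lt_of_lt_of_le hcδ.2 hxδ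
    set S := Icc c x ∩ W ⁻¹' Ici 0 with hSdef
    have hsub : Icc c x ⊆ Ico 0 b := fun t ht =>
      ⟨le_trans (le_of_lt hcδ.1) ht.1, lt_of_le_of_lt ht.2 hx.2⟩
    have hScl : IsClosed S :=
      (hWc.mono hsub).preimage_isClosed_of_isClosed isClosed_Icc isClosed_Ici
    have hSne : S.Nonempty := ⟨x, ⟨le_of_lt hcx, le_refl x⟩, hcon⟩
    have hSbdd : BddBelow S := BddBelow.mono inter_subset_left bddBelow_Icc
    set s := sInf S with hsdef
    have hsS : s ∈ S := hScl.csInf_mem hSne hSbdd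
    have hcs : c ≤ s := hsS.1.1
    have hsx : s ≤ x := hsS.1.2
    have hWsge : 0 ≤ W s := hsS.2
    have hcs' : c < s := lt_of_le_of_ne hcs (fun h => by rw [← h] at hWsge; linarith)
    have hnegIco : ∀ t ∈ Ico c s, W t < 0 := by
      intro t ht
      by_contra hle; push_neg at hle
      exact absurd (csInf_le hSbdd ⟨⟨ht.1, le_trans (le_of_lt ht.2) hsx⟩, hle⟩)
        (not_le.2 ht.2)
    have hsb : s ∈ Ioo (0 : ℝ) b := ⟨lt_trans hcδ.1 hcs', lt_of_le_of_lt hsx hx.2⟩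
    have hclos : s ∈ closure (Ioo c s) := by
      rw [closure_Ioo (ne_of_lt hcs')]; exact ⟨le_of_lt hcs', le_refl s⟩
    haveI : (𝓝[Ioo c s] s).NeBot := mem_closure_iff_nhdsWithin_neBot.1 hclos
    have hcw : Tendsto W (𝓝[Ioo c s] s) (𝓝 (W s)) := by
      have h : ContinuousWithinAt W (Ico 0 b) s := hWc s ⟨le_of_lt hsb.1, hsb.2⟩
      exact h.mono_left (nhdsWithin_mono _ fun t ht =>
        ⟨le_trans (le_of_lt hcδ.1) (le_of_lt ht.1), lt_trans ht.2 hsb.2⟩)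
    have hWsle : W s ≤ 0 :=
      le_of_tendsto hcw (eventually_mem_nhdsWithin.mono fun t ht =>
        le_of_lt (hnegIco t ⟨le_of_lt ht.1, ht.2⟩))
    have hWs0 : W s = 0 := le_antisymm hWsle hWsge
    have hd : deriv W s < 0 := by
      rw [hW' s hsb, hWs0]
      simpa using hfneg s
    have hge : 0 ≤ deriv W s := by
      have hT : Tendsto (slope W s) (𝓝[<] s) (𝓝 (deriv W s)) :=
        (hasDerivAt_iff_tendsto_slope.1 (hWd s hsb).hasDerivAt).mono_left
          (nhdsWithin_mono _ fun t ht => mem_compl_singleton_iff.2 (ne_of_lt ht))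
      refine ge_of_tendsto hT ?_
      filter_upwards [Ioo_mem_nhdsLT_of_mem (⟨hcs', le_refl s⟩ : s ∈ Ioc c s)] with t ht
      rw [slope_def_field, hWs0, sub_zero]
      exact le_of_lt (div_pos_of_neg_of_neg (hnegIco t ⟨le_of_lt ht.1, ht.2⟩)
        (by linarith [ht.2]))
    linarith
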